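/- arXiv:2407.20400 — 4 statements merged into one kernel-verified Lean document; each statement's English description precedes it below -/
import Mathlib

section
/- With L_n as defined, the map F_n : L_n → ℂ² given on a point P with Y_{1,i} + Y_{1,i+1} + Y_{2,j} + Y_{2,j+1} = 1 by F_n(P) = (e^{2πi·(i/n)} f_n(Y_{1,i}, Y_{1,i+1}), e^{2πi·(j/n)} f_n(Y_{2,j}, Y_{2,j+1})) is well defined: its value does not depend on the choice of admissible indices i, j. -/
open Complex

/-- `fTri n (x₁, x₂) = sin((π/2)(x₁+x₂)) · exp((2πi/n)·(x₂/(x₁+x₂)))` for `(x₁,x₂) ≠ (0,0)`,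
and `fTri n (0,0) = 0`. -/
noncomputable def fTri (n : ℕ) (p : ℝ × ℝ) : ℂ :=
  if p = (0, 0) then 0
  else ((Real.sin (Real.pi / 2 * (p.1 + p.2)) : ℝ) : ℂ) *
    Complex.exp (2 * Real.pi * Complex.I / n * ((p.2 / (p.1 + p.2) : ℝ) : ℂ))

/-- `(i,·)` is admissible for `Y` in the group `μ`: the support of `Y (μ, ·)` is contained
in the consecutive pair `{i, i+1}` of `ℤ/nℤ`. -/
def Adm (n : ℕ) (Y : Fin 2 × ZMod n → ℝ) (μ : Fin 2) (i : ZMod n) : Prop :=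
  ∀ j : ZMod n, Y (μ, j) ≠ 0 → j = i ∨ j = i + 1

/-- `L_n ⊆ ℝ^{2n}`: nonnegative points, with coordinates indexed by `{1,2} × ℤ/nℤ`,
summing to `1`, whose support in each `μ`-group is contained in a consecutive pair mod `n`. -/
def Ln (n : ℕ) [NeZero n] : Set (Fin 2 × ZMod n → ℝ) :=
  {Y | (∀ p, 0 ≤ Y p) ∧ (∑ p, Y p) = 1 ∧ ∀ μ : Fin 2, ∃ i : ZMod n, Adm n Y μ i}

/-- The `μ`-component of `F_n` computed with the admissible index `i`:
`e^{2πi·(i/n)} · f_n(Y_{μ,i}, Y_{μ,i+1})`. -/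
noncomputable def Fcomp (n : ℕ) [NeZero n] (Y : Fin 2 × ZMod n → ℝ) (μ : Fin 2)
    (i : ZMod n) : ℂ :=
  Complex.exp (2 * Real.pi * Complex.I * ((i.val : ℂ) / n)) * fTri n (Y (μ, i), Y (μ, i + 1))

lemma exp_nat_congr (n : ℕ) [NeZero n] (a b : ℕ) (h : (a : ZMod n) = b) :
    Complex.exp (2 * Real.pi * Complex.I * ((a : ℂ) / n)) =
    Complex.exp (2 * Real.pi * Complex.I * ((b : ℂ) / n)) := by
  have hn : (n : ℂ) ≠ 0 := Nat.cast_ne_zero.mpr (NeZero.ne n)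
  rw [ZMod.natCast_eq_natCast_iff] at h
  obtain ⟨m, hm⟩ := h.dvd
  have hb : (b : ℂ) = (a : ℂ) + n * m := by
    have := congrArg (Int.cast : ℤ → ℂ) hm
    push_cast at this
    linear_combination this
  rw [hb, show 2 * Real.pi * Complex.I * (((a : ℂ) + n * m) / n)
      = 2 * Real.pi * Complex.I * ((a : ℂ) / n) + m * (2 * Real.pi * Complex.I) by
    field_simp]
  rw [Complex.exp_add, Complex.exp_int_mul_two_pi_mul_I, mul_one]

lemma key (n : ℕ) [NeZero n] (Y : Fin 2 × ZMod n → ℝ) (μ : Fin 2) (k : ZMod n)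
    (ha : Y (μ, k) ≠ 0) (h1 : Y (μ, k + 1) = 0) (h2 : Y (μ, k - 1) = 0) :
    Fcomp n Y μ k = Fcomp n Y μ (k - 1) := by
  have hk1 : k - 1 + 1 = k := sub_add_cancel k 1
  set a := Y (μ, k) with hadef
  have hf1 : fTri n (a, 0) = ((Real.sin (Real.pi / 2 * a) : ℝ) : ℂ) := by
    rw [fTri]
    rw [if_neg (by simp [ha])]
    simp
  have hf2 : fTri n (0, a) = ((Real.sin (Real.pi / 2 * a) : ℝ) : ℂ) *
      Complex.exp (2 * Real.pi * Complex.I / n) := by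
    rw [fTri]
    rw [if_neg (by simp [ha])]
    simp [div_self ha]
  have hE : Complex.exp (2 * Real.pi * Complex.I * (((k - 1).val : ℂ) / n)) *
      Complex.exp (2 * Real.pi * Complex.I / n) =
      Complex.exp (2 * Real.pi * Complex.I * (((k).val : ℂ) / n)) := by
    rw [← Complex.exp_add]
    have h := exp_nat_congr n ((k - 1).val + 1) k.val (by
      push_cast
      rw [ZMod.natCast_zmod_val, ZMod.natCast_zmod_val, hk1])
    rw [← h]
    congr 1
    have hn : (n : ℂ) ≠ 0 := Nat.cast_ne_zero.mpr (NeZero.ne n)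
    push_cast
    field_simp
  rw [Fcomp, Fcomp, hk1, h1, h2, ← hadef, hf1, hf2, ← hE]
  ring

/-- the map `F_n` is well defined on `L_n`: its value does not depend on the
choice of admissible indices. -/
theorem Fcomp_welldefined (n : ℕ) [NeZero n] (hn : 3 ≤ n) :
    ∀ Y ∈ Ln n, ∀ (μ : Fin 2) (i i' : ZMod n),
      Adm n Y μ i → Adm n Y μ i' → Fcomp n Y μ i = Fcomp n Y μ i' := by
  intro Y hY μ i i' hi hi'
  have h2 : (2 : ZMod n) ≠ 0 := by
    have hnd : ¬ (n ∣ 2) := fun h => by have := Nat.le_of_dvd (by norm_num) h; omega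
    rw [show (2 : ZMod n) = ((2 : ℕ) : ZMod n) by push_cast; ring, Ne,
      ZMod.natCast_eq_zero_iff]
    exact hnd
  by_cases hii : i = i'
  · rw [hii]
  by_cases h0 : ∀ j, Y (μ, j) = 0
  · simp [Fcomp, h0, fTri]
  push_neg at h0
  obtain ⟨k, hk⟩ := h0
  rcases hi k hk with hk1 | hk1 <;> rcases hi' k hk with hk2 | hk2
  · exact absurd (hk1.symm.trans hk2) hii
  · -- k = i, k = i' + 1, so i' = k - 1
    have hi'k : i' = k - 1 := by linear_combination -hk2
    subst hk1
    rw [hi'k]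
    apply key n Y μ k hk
    · by_contra h
      rcases hi' _ h with h' | h'
      · exact h2 (by linear_combination h' - hk2)
      · exact hii (by linear_combination h')
    · by_contra h
      rcases hi _ h with h' | h'
      · exact h2 (by linear_combination -2 * h')
      · exact h2 (by linear_combination -h')
  · -- k = i + 1, k = i', so i = k - 1
    subst hk2
    have hik : i = k - 1 := by linear_combination -hk1
    rw [hik]
    refine (key n Y μ k hk ?_ ?_).symm
    · by_contra h
      rcases hi _ h with h' | h'
      · exact h2 (by linear_combination h' - hk1)
      · exact h2 (by linear_combination 2 * h' - 2 * hk1)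
    · by_contra h
      rcases hi' _ h with h' | h'
      · exact h2 (by linear_combination -2 * h')
      · exact h2 (by linear_combination -h')
  · exact absurd (by linear_combination hk2 - hk1) hii
end

section
/- Every value of F_n lies on the unit sphere S³ = {(z,w) ∈ ℂ² : |z|² + |w|² = 1}. -/
open Complex

lemma abs_fTri (n : ℕ) (p : ℝ × ℝ) :
    ‖fTri n p‖ = |Real.sin (Real.pi / 2 * (p.1 + p.2))| := by
  unfold fTri
  split_ifs with h
  · rw [h]; simp
  · rw [norm_mul, Complex.norm_real, Real.norm_eq_abs]
    have : (2 * Real.pi * Complex.I / n * ((p.2 / (p.1 + p.2) : ℝ) : ℂ)) =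
        ((2 * Real.pi / n * (p.2 / (p.1 + p.2)) : ℝ) : ℂ) * Complex.I := by
      push_cast; ring
    rw [this, Complex.norm_exp_ofReal_mul_I, mul_one]

lemma abs_Fcomp (n : ℕ) [NeZero n] (Y : Fin 2 × ZMod n → ℝ) (μ : Fin 2) (i : ZMod n) :
    ‖Fcomp n Y μ i‖ = |Real.sin (Real.pi / 2 * (Y (μ, i) + Y (μ, i + 1)))| := by
  unfold Fcomp
  rw [norm_mul]
  have : (2 * Real.pi * Complex.I * ((i.val : ℂ) / n)) =
      ((2 * Real.pi * (i.val / n) : ℝ) : ℂ) * Complex.I := by push_cast; ring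
  rw [this, Complex.norm_exp_ofReal_mul_I, one_mul, abs_fTri]

/-- every value of `F_n` lies on the unit sphere
`S³ = {(z,w) ∈ ℂ² : |z|² + |w|² = 1}`. -/
theorem Fn_mem_sphere (n : ℕ) [NeZero n] (hn : 3 ≤ n) :
    ∀ Y ∈ Ln n, ∀ i j : ZMod n, Adm n Y 0 i → Adm n Y 1 j →
      ‖Fcomp n Y 0 i‖ ^ 2 + ‖Fcomp n Y 1 j‖ ^ 2 = 1 := by
  intro Y hY i j hi hj
  obtain ⟨hpos, hsum, -⟩ := hY
  haveI : Fact (1 < n) := ⟨by omega⟩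
  have hne : ∀ k : ZMod n, k ≠ k + 1 := by
    intro k h
    exact one_ne_zero (left_eq_add.mp h)
  have key : ∀ (μ : Fin 2) (k : ZMod n), Adm n Y μ k →
      (∑ l : ZMod n, Y (μ, l)) = Y (μ, k) + Y (μ, k + 1) := by
    intro μ k hk
    rw [show Y (μ, k) + Y (μ, k + 1) = ∑ l ∈ ({k, k + 1} : Finset (ZMod n)), Y (μ, l) from
      (Finset.sum_pair (f := fun l => Y (μ, l)) (hne k)).symm]
    apply (Finset.sum_subset (Finset.subset_univ _) _).symm
    intro x _ hx
    by_contra hx0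
    rcases hk x hx0 with h | h <;> simp [h] at hx
  have hsum' : Y (0, i) + Y (0, i + 1) + (Y (1, j) + Y (1, j + 1)) = 1 := by
    rw [← key 0 i hi, ← key 1 j hj, ← hsum, Fintype.sum_prod_type]
    rw [Fin.sum_univ_two]
  rw [abs_Fcomp, abs_Fcomp, _root_.sq_abs, _root_.sq_abs]
  set a := Y (0, i) + Y (0, i + 1)
  have hb : Y (1, j) + Y (1, j + 1) = 1 - a := by linarith
  rw [hb]
  have : Real.pi / 2 * (1 - a) = Real.pi / 2 - Real.pi / 2 * a := by ring
  rw [this, Real.sin_pi_div_two_sub]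
  exact Real.sin_sq_add_cos_sq _
end

section
/- The map F_n : L_n → S³ is injective. -/
open Complex

/-! ### Auxiliary machinery -/

/-- The canonical "profile" determined by a total mass `s` and a real position `a`:
mass `s(1 - fract a)` at `⌊a⌋ mod n` and mass `s · fract a` at `⌊a⌋ + 1 mod n`. -/
noncomputable def gProf (n : ℕ) (s a : ℝ) (j : ZMod n) : ℝ :=
  if j = ((⌊a⌋ : ℤ) : ZMod n) then s * (1 - Int.fract a)
  else if j = ((⌊a⌋ + 1 : ℤ) : ZMod n) then s * Int.fract a
  else 0

lemma gProf_add_int (n : ℕ) (s a : ℝ) (m : ℤ) : gProf n s (a + m * n) = gProf n s a := by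
  funext j
  have hc : ((m : ℝ) * n) = ((m * n : ℤ) : ℝ) := by push_cast; ring
  have hfl : ⌊a + (m : ℝ) * n⌋ = ⌊a⌋ + m * n := by rw [hc, Int.floor_add_intCast]
  have hfr : Int.fract (a + (m : ℝ) * n) = Int.fract a := by rw [hc, Int.fract_add_intCast]
  simp only [gProf, hfl, hfr]
  rw [show ((⌊a⌋ + m * n + 1 : ℤ) : ZMod n) = ((⌊a⌋ + 1 : ℤ) : ZMod n) by
        push_cast [ZMod.natCast_self]; ring,
      show ((⌊a⌋ + m * n : ℤ) : ZMod n) = ((⌊a⌋ : ℤ) : ZMod n) by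
        push_cast [ZMod.natCast_self]; ring]

lemma polar_eq (r r' x x' : ℝ) (hr : 0 < r) (hr' : 0 < r')
    (h : (r : ℂ) * Complex.exp (2 * Real.pi * Complex.I * (x : ℂ))
       = (r' : ℂ) * Complex.exp (2 * Real.pi * Complex.I * (x' : ℂ))) :
    r = r' ∧ ∃ m : ℤ, x = x' + m := by
  have habs : r = r' := by
    have := congrArg (‖·‖) h
    simpa [map_mul, Complex.norm_exp, abs_of_pos hr, abs_of_pos hr'] using this
  refine ⟨habs, ?_⟩
  subst habs
  have hrne : (r : ℂ) ≠ 0 := by exact_mod_cast hr.ne'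
  have hexp := mul_left_cancel₀ hrne h
  rw [Complex.exp_eq_exp_iff_exists_int] at hexp
  obtain ⟨m, hm⟩ := hexp
  refine ⟨m, ?_⟩
  have hne : (2 * (Real.pi : ℂ) * Complex.I) ≠ 0 := by
    simp [Real.pi_ne_zero, Complex.I_ne_zero]
  have : (x : ℂ) = (x' : ℂ) + m := by
    apply mul_left_cancel₀ hne
    rw [hm]; ring
  exact_mod_cast this

lemma rep (n : ℕ) [NeZero n] (hn : 3 ≤ n) (Z : ZMod n → ℝ) (h0 : ∀ j, 0 ≤ Z j)
    (i : ZMod n) (hA : ∀ j, Z j ≠ 0 → j = i ∨ j = i + 1)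
    (hs : 0 < Z i + Z (i + 1)) :
    Z = gProf n (Z i + Z (i + 1)) ((i.val : ℝ) + Z (i + 1) / (Z i + Z (i + 1))) := by
  haveI : Fact (1 < n) := ⟨by omega⟩
  set s := Z i + Z (i + 1) with hsdef
  set t := Z (i + 1) / s with htdef
  have hone : (1 : ZMod n) ≠ 0 := one_ne_zero
  have htwo : (2 : ZMod n) ≠ 0 := by
    intro h
    have h2 : ((2 : ℕ) : ZMod n) = 0 := by exact_mod_cast h
    have hv := ZMod.val_cast_of_lt (show 2 < n by omega)
    rw [h2] at hv
    simp at hv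
  have hicast : (((i.val : ℤ)) : ZMod n) = i := by
    push_cast
    simp [ZMod.natCast_val, ZMod.cast_id]
  have ht0 : 0 ≤ t := div_nonneg (h0 _) hs.le
  have hst : s * t = Z (i + 1) := by
    rw [htdef, mul_div_cancel₀ _ hs.ne']
  have ht1 : t ≤ 1 := by
    rw [htdef, div_le_one hs]
    have := h0 i; linarith
  rcases eq_or_lt_of_le ht1 with ht1e | ht1l
  · -- t = 1 : Z i = 0, Z (i+1) = s
    have hZi1 : Z (i + 1) = s := by rw [← hst, ht1e, mul_one]
    have hZi : Z i = 0 := by linarith [hZi1, hsdef]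
    have ha : (i.val : ℝ) + t = ((i.val + 1 : ℤ) : ℝ) := by rw [ht1e]; push_cast; ring
    have hfl : ⌊(i.val : ℝ) + t⌋ = (i.val : ℤ) + 1 := by rw [ha, Int.floor_intCast]
    have hfr : Int.fract ((i.val : ℝ) + t) = 0 := by rw [ha, Int.fract_intCast]
    funext j
    simp only [gProf, hfl, hfr]
    rw [show (((i.val : ℤ) + 1 : ℤ) : ZMod n) = i + 1 by push_cast [hicast]; ring,
        show (((i.val : ℤ) + 1 + 1 : ℤ) : ZMod n) = i + 2 by push_cast [hicast]; ring]
    by_cases h1 : j = i + 1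
    · rw [if_pos h1, h1, hZi1]; ring
    · rw [if_neg h1]
      by_cases h2 : j = i + 2
      · rw [if_pos h2, h2, mul_zero]
        by_contra hne
        rcases hA _ hne with h | h
        · exact htwo (by linear_combination h)
        · exact hone (by linear_combination h)
      · rw [if_neg h2]
        by_contra hne
        rcases hA _ hne with h | h
        · exact hne (by rw [h]; exact hZi)
        · exact h1 h
  · -- t < 1
    have hfl : ⌊(i.val : ℝ) + t⌋ = (i.val : ℤ) := by
      rw [show ((i.val : ℝ)) = ((i.val : ℤ) : ℝ) by push_cast; ring, Int.floor_intCast_add,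
        Int.floor_eq_zero_iff.2 ⟨ht0, ht1l⟩, add_zero]
    have hfr : Int.fract ((i.val : ℝ) + t) = t := by
      rw [show ((i.val : ℝ)) = ((i.val : ℤ) : ℝ) by push_cast; ring, Int.fract_intCast_add,
        Int.fract_eq_self.2 ⟨ht0, ht1l⟩]
    funext j
    simp only [gProf, hfl, hfr, hicast]
    rw [show (((i.val : ℤ) + 1 : ℤ) : ZMod n) = i + 1 by push_cast [hicast]; ring]
    by_cases h1 : j = i
    · rw [if_pos h1, h1, mul_sub, mul_one, hst, hsdef]; ring
    · rw [if_neg h1]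
      by_cases h2 : j = i + 1
      · rw [if_pos h2, h2, hst]
      · rw [if_neg h2]
        by_contra hne
        rcases hA _ hne with h | h
        · exact h1 h
        · exact h2 h

lemma fTri_ne_zero (n : ℕ) (x₁ x₂ : ℝ) (h1 : 0 ≤ x₁) (h2 : 0 ≤ x₂) (hb : x₁ + x₂ ≤ 1)
    (h : (x₁, x₂) ≠ ((0 : ℝ), (0 : ℝ))) : fTri n (x₁, x₂) ≠ 0 := by
  rw [fTri, if_neg h]
  apply mul_ne_zero _ (Complex.exp_ne_zero _)
  rw [Ne, Complex.ofReal_eq_zero]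
  have hs : 0 < x₁ + x₂ := by
    rcases (add_nonneg h1 h2).lt_or_eq with hlt | he
    · exact hlt
    · exfalso; apply h
      have e1 : x₁ = 0 := by linarith
      have e2 : x₂ = 0 := by linarith
      rw [e1, e2]
  have : 0 < Real.sin (Real.pi / 2 * (x₁ + x₂)) := by
    apply Real.sin_pos_of_pos_of_lt_pi
    · positivity
    · nlinarith [Real.pi_pos]
  exact this.ne'

lemma form_eq (n : ℕ) [NeZero n] (v : ℕ) (x₁ x₂ : ℝ)
    (h : (x₁, x₂) ≠ ((0 : ℝ), (0 : ℝ))) :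
    Complex.exp (2 * Real.pi * Complex.I * ((v : ℂ) / n)) * fTri n (x₁, x₂)
      = ((Real.sin (Real.pi / 2 * (x₁ + x₂)) : ℝ) : ℂ) *
        Complex.exp (2 * Real.pi * Complex.I *
          (((((v : ℝ) + x₂ / (x₁ + x₂)) / n : ℝ)) : ℂ)) := by
  rw [fTri, if_neg h, mul_left_comm, ← Complex.exp_add]
  congr 2
  rw [show ((((v : ℝ) + x₂ / (x₁ + x₂)) / n : ℝ) : ℂ)
      = ((v : ℂ) + ((x₂ / (x₁ + x₂) : ℝ) : ℂ)) / (n : ℂ) by push_cast; ring]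
  generalize ((x₂ / (x₁ + x₂) : ℝ) : ℂ) = w
  ring

lemma comp_key (n : ℕ) [NeZero n] (hn : 3 ≤ n) (Z Z' : ZMod n → ℝ)
    (h0 : ∀ j, 0 ≤ Z j) (h0' : ∀ j, 0 ≤ Z' j) (i i' : ZMod n)
    (hA : ∀ j, Z j ≠ 0 → j = i ∨ j = i + 1) (hA' : ∀ j, Z' j ≠ 0 → j = i' ∨ j = i' + 1)
    (hb : Z i + Z (i + 1) ≤ 1) (hb' : Z' i' + Z' (i' + 1) ≤ 1)
    (heq : Complex.exp (2 * Real.pi * Complex.I * ((i.val : ℂ) / n)) * fTri n (Z i, Z (i + 1))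
         = Complex.exp (2 * Real.pi * Complex.I * ((i'.val : ℂ) / n))
             * fTri n (Z' i', Z' (i' + 1))) :
    Z = Z' := by
  have hzero : ∀ (W : ZMod n → ℝ) (k : ZMod n),
      (∀ j, W j ≠ 0 → j = k ∨ j = k + 1) → W k = 0 → W (k + 1) = 0 → ∀ j, W j = 0 := by
    intro W k hAk hk hk1 j
    by_contra hne
    rcases hAk j hne with h | h
    · exact hne (by rw [h]; exact hk)
    · exact hne (by rw [h]; exact hk1)
  by_cases hp : (Z i, Z (i + 1)) = ((0 : ℝ), 0)
  · have e1 : Z i = 0 := congrArg Prod.fst hp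
    have e2 : Z (i + 1) = 0 := congrArg Prod.snd hp
    have h1 : fTri n (Z i, Z (i + 1)) = 0 := by rw [hp]; simp [fTri]
    rw [h1, mul_zero] at heq
    by_cases hp' : (Z' i', Z' (i' + 1)) = ((0 : ℝ), 0)
    · have e1' : Z' i' = 0 := congrArg Prod.fst hp'
      have e2' : Z' (i' + 1) = 0 := congrArg Prod.snd hp'
      funext j
      rw [hzero Z i hA e1 e2 j, hzero Z' i' hA' e1' e2' j]
    · exfalso
      apply fTri_ne_zero n (Z' i') (Z' (i' + 1)) (h0' _) (h0' _) hb' hp'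
      rcases mul_eq_zero.mp heq.symm with h | h
      · exact absurd h (Complex.exp_ne_zero _)
      · exact h
  · by_cases hp' : (Z' i', Z' (i' + 1)) = ((0 : ℝ), 0)
    · exfalso
      have h1 : fTri n (Z' i', Z' (i' + 1)) = 0 := by rw [hp']; simp [fTri]
      rw [h1, mul_zero] at heq
      apply fTri_ne_zero n (Z i) (Z (i + 1)) (h0 _) (h0 _) hb hp
      rcases mul_eq_zero.mp heq with h | h
      · exact absurd h (Complex.exp_ne_zero _)
      · exact h
    · -- both pairs nonzero
      have hs : 0 < Z i + Z (i + 1) := by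
        rcases (add_nonneg (h0 i) (h0 (i + 1))).lt_or_eq with hlt | he
        · exact hlt
        · exfalso; apply hp
          have e1 : Z i = 0 := by linarith [h0 i, h0 (i + 1)]
          have e2 : Z (i + 1) = 0 := by linarith [h0 i, h0 (i + 1)]
          rw [e1, e2]
      have hs' : 0 < Z' i' + Z' (i' + 1) := by
        rcases (add_nonneg (h0' i') (h0' (i' + 1))).lt_or_eq with hlt | he
        · exact hlt
        · exfalso; apply hp'
          have e1 : Z' i' = 0 := by linarith [h0' i', h0' (i' + 1)]
          have e2 : Z' (i' + 1) = 0 := by linarith [h0' i', h0' (i' + 1)]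
          rw [e1, e2]
      rw [form_eq n i.val _ _ hp, form_eq n i'.val _ _ hp'] at heq
      have hsinpos : 0 < Real.sin (Real.pi / 2 * (Z i + Z (i + 1))) := by
        apply Real.sin_pos_of_pos_of_lt_pi
        · positivity
        · nlinarith [Real.pi_pos]
      have hsinpos' : 0 < Real.sin (Real.pi / 2 * (Z' i' + Z' (i' + 1))) := by
        apply Real.sin_pos_of_pos_of_lt_pi
        · positivity
        · nlinarith [Real.pi_pos]
      obtain ⟨hsin, m, hm⟩ := polar_eq _ _ _ _ hsinpos hsinpos' heq
      have hseq : Z i + Z (i + 1) = Z' i' + Z' (i' + 1) := by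
        have hmem1 : Real.pi / 2 * (Z i + Z (i + 1))
            ∈ Set.Icc (-(Real.pi / 2)) (Real.pi / 2) := by
          constructor <;> nlinarith [Real.pi_pos]
        have hmem2 : Real.pi / 2 * (Z' i' + Z' (i' + 1))
            ∈ Set.Icc (-(Real.pi / 2)) (Real.pi / 2) := by
          constructor <;> nlinarith [Real.pi_pos]
        have := Real.injOn_sin hmem1 hmem2 hsin
        exact mul_left_cancel₀ (by positivity : (0 : ℝ) < Real.pi / 2).ne' this
      have hn0 : (n : ℝ) ≠ 0 := Nat.cast_ne_zero.2 (NeZero.ne n)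
      have h4 : (i.val : ℝ) + Z (i + 1) / (Z i + Z (i + 1))
          = ((i'.val : ℝ) + Z' (i' + 1) / (Z' i' + Z' (i' + 1))) + m * n := by
        have h5 := congrArg (fun x : ℝ => x * n) hm
        rwa [div_mul_cancel₀ _ hn0, add_mul, div_mul_cancel₀ _ hn0] at h5
      calc Z = gProf n (Z i + Z (i + 1)) ((i.val : ℝ) + Z (i + 1) / (Z i + Z (i + 1))) :=
            rep n hn Z h0 i hA hs
        _ = gProf n (Z' i' + Z' (i' + 1))
              (((i'.val : ℝ) + Z' (i' + 1) / (Z' i' + Z' (i' + 1))) + m * n) := by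
            rw [h4, hseq]
        _ = gProf n (Z' i' + Z' (i' + 1))
              ((i'.val : ℝ) + Z' (i' + 1) / (Z' i' + Z' (i' + 1))) := gProf_add_int ..
        _ = Z' := (rep n hn Z' h0' i' hA' hs').symm

/-- the map `F_n : L_n → S³` is injective. -/
theorem Fn_injective (n : ℕ) [NeZero n] (hn : 3 ≤ n) :
    ∀ Y ∈ Ln n, ∀ Y' ∈ Ln n, ∀ i j i' j' : ZMod n,
      Adm n Y 0 i → Adm n Y 1 j → Adm n Y' 0 i' → Adm n Y' 1 j' →
      Fcomp n Y 0 i = Fcomp n Y' 0 i' → Fcomp n Y 1 j = Fcomp n Y' 1 j' → Y = Y' := by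
  intro Y hY Y' hY' i j i' j' hAi hAj hAi' hAj' h0 h1
  haveI : Fact (1 < n) := ⟨by omega⟩
  obtain ⟨hY0, hYsum, -⟩ := hY
  obtain ⟨hY0', hYsum', -⟩ := hY'
  have pairle : ∀ (W : Fin 2 × ZMod n → ℝ), (∀ p, 0 ≤ W p) → (∑ p, W p) = 1 →
      ∀ (μ : Fin 2) (k : ZMod n), W (μ, k) + W (μ, k + 1) ≤ 1 := by
    intro W hW0 hWsum μ k
    have hne : ((μ, k) : Fin 2 × ZMod n) ≠ (μ, k + 1) := by
      intro h
      have hk : k = k + 1 := congrArg Prod.snd h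
      have : (1 : ZMod n) = 0 := by linear_combination -hk
      exact one_ne_zero this
    calc W (μ, k) + W (μ, k + 1) = ∑ p ∈ ({(μ, k), (μ, k + 1)} : Finset _), W p :=
          (Finset.sum_pair hne).symm
      _ ≤ ∑ p, W p := Finset.sum_le_sum_of_subset_of_nonneg (Finset.subset_univ _)
          (fun p _ _ => hW0 p)
      _ = 1 := hWsum
  have key0 : (fun k => Y (0, k)) = (fun k => Y' (0, k)) :=
    comp_key n hn _ _ (fun k => hY0 (0, k)) (fun k => hY0' (0, k)) i i' hAi hAi'
      (pairle Y hY0 hYsum 0 i) (pairle Y' hY0' hYsum' 0 i') h0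
  have key1 : (fun k => Y (1, k)) = (fun k => Y' (1, k)) :=
    comp_key n hn _ _ (fun k => hY0 (1, k)) (fun k => hY0' (1, k)) j j' hAj hAj'
      (pairle Y hY0 hYsum 1 j) (pairle Y' hY0' hYsum' 1 j') h1
  funext p
  obtain ⟨μ, k⟩ := p
  fin_cases μ
  · exact congrFun key0 k
  · exact congrFun key1 k
end

section
/- The map F_n : L_n → S³ is surjective. -/
open Complex

lemma comp_lemma (n : ℕ) (hn : 3 ≤ n) (t : ℝ) (ht0 : 0 ≤ t) (ht1 : t ≤ 1) (z : ℂ)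
    (hz : ‖z‖ = Real.sin (Real.pi / 2 * t)) :
    ∃ (a b : ℝ) (i : ZMod n), 0 ≤ a ∧ 0 ≤ b ∧ a + b = t ∧
      Complex.exp (2 * Real.pi * Complex.I * ((i.val : ℂ) / n)) * fTri n (a, b) = z := by
  have hnpos : (0:ℕ) < n := by omega
  have hπ := Real.pi_pos
  by_cases hz0 : z = 0
  · -- t = 0
    have hsin : Real.sin (Real.pi / 2 * t) = 0 := by
      rw [← hz, hz0]; simp
    have ht : t = 0 := by
      by_contra h
      have htpos : 0 < t := lt_of_le_of_ne ht0 (Ne.symm h)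
      have h1 : 0 < Real.pi / 2 * t := by positivity
      have h2 : Real.pi / 2 * t < Real.pi := by nlinarith
      have := Real.sin_pos_of_pos_of_lt_pi h1 h2
      linarith [hsin ▸ this]
    exact ⟨0, 0, 0, le_refl _, le_refl _, by simp [ht], by simp [fTri, hz0]⟩
  · have hr : 0 < ‖z‖ := norm_pos_iff.mpr hz0
    have htpos : 0 < t := by
      by_contra h
      have : t = 0 := le_antisymm (not_lt.1 h) ht0
      rw [this] at hz; simp at hz; exact hz0 hz
    set θ : ℝ := if 0 ≤ Complex.arg z then Complex.arg z else Complex.arg z + 2 * Real.pi with hθ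
    have harg1 := Complex.arg_le_pi z
    have harg2 := Complex.neg_pi_lt_arg z
    have hθ0 : 0 ≤ θ := by
      rw [hθ]; split <;> [assumption; linarith]
    have hθ2 : θ < 2 * Real.pi := by
      rw [hθ]; split <;> [linarith; linarith]
    have hexpθ : Complex.exp (θ * Complex.I) = Complex.exp (Complex.arg z * Complex.I) := by
      rw [hθ]; split
      · rfl
      · push_cast
        rw [add_mul, Complex.exp_add]
        simp [Complex.exp_two_pi_mul_I]
    set c : ℝ := n * θ / (2 * Real.pi) with hc
    have hc0 : 0 ≤ c := by positivity
    have hcn : c < n := by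
      rw [hc, div_lt_iff₀ (by positivity)]
      calc (n:ℝ) * θ < n * (2 * Real.pi) := by
            exact mul_lt_mul_of_pos_left hθ2 (by exact_mod_cast hnpos)
        _ = n * (2 * Real.pi) := rfl
    set m : ℕ := ⌊c⌋₊ with hm
    have hmn : m < n := by
      rw [hm]; exact (Nat.floor_lt hc0).2 hcn
    set s : ℝ := c - m with hs
    have hs0 : 0 ≤ s := by
      rw [hs]; linarith [Nat.floor_le hc0]
    have hs1 : s < 1 := by
      rw [hs]; linarith [Nat.lt_floor_add_one c]
    refine ⟨t * (1 - s), t * s, (m : ZMod n), by nlinarith, by positivity, by ring, ?_⟩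
    have hval : ((m : ZMod n)).val = m := ZMod.val_cast_of_lt hmn
    have hne : (t * (1 - s), t * s) ≠ ((0:ℝ), (0:ℝ)) := by
      intro h
      have h1 : t * (1 - s) = 0 := congrArg Prod.fst h
      have h2 : t * s = 0 := congrArg Prod.snd h
      nlinarith
    rw [fTri, if_neg hne]
    simp only
    have hsum : t * (1 - s) + t * s = t := by ring
    rw [hsum]
    have hdiv : t * s / t = s := by field_simp
    rw [hdiv, hval]
    have hzz : z = (‖z‖ : ℂ) * Complex.exp (Complex.arg z * Complex.I) := by
      rw [Complex.norm_mul_exp_arg_mul_I]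
    rw [hzz, ← hexpθ, hz]
    rw [show Complex.exp (2 * (Real.pi:ℂ) * Complex.I * ((m:ℂ) / n)) *
        ((Real.sin (Real.pi/2*t) : ℂ) * Complex.exp (2 * (Real.pi:ℂ) * Complex.I / n * (s:ℂ)))
        = (Real.sin (Real.pi/2*t) : ℂ) * (Complex.exp (2 * (Real.pi:ℂ) * Complex.I * ((m:ℂ)/n)) *
          Complex.exp (2 * (Real.pi:ℂ) * Complex.I / n * (s:ℂ))) from by ring, ← Complex.exp_add]
    congr 2
    have hrel : θ * n = 2 * Real.pi * m + 2 * Real.pi * s := by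
      rw [hs, hc]; field_simp; ring
    have hrelC : (θ : ℂ) * n = 2 * (Real.pi:ℂ) * m + 2 * Real.pi * s := by
      exact_mod_cast hrel
    have hnC : (n : ℂ) ≠ 0 := by exact_mod_cast hnpos.ne'
    field_simp
    linear_combination (-1 : ℂ) * hrelC

/-- the map `F_n : L_n → S³` is surjective: every point `(z,w)` with
`|z|² + |w|² = 1` is a value of `F_n`. -/
theorem Fn_surjective (n : ℕ) [NeZero n] (hn : 3 ≤ n) :
    ∀ z w : ℂ, ‖z‖ ^ 2 + ‖w‖ ^ 2 = 1 →
      ∃ Y ∈ Ln n, ∃ i j : ZMod n, Adm n Y 0 i ∧ Adm n Y 1 j ∧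
        Fcomp n Y 0 i = z ∧ Fcomp n Y 1 j = w := by

  intro z w hzw
  have hπ := Real.pi_pos
  set r := ‖z‖ with hr
  have hr0 : 0 ≤ r := norm_nonneg z
  have hw0 : 0 ≤ ‖w‖ := norm_nonneg w
  have hr1 : r ≤ 1 := by nlinarith
  set t₁ : ℝ := 2 / Real.pi * Real.arcsin r with ht₁
  have ha0 : 0 ≤ Real.arcsin r := Real.arcsin_nonneg.2 hr0
  have ha1 : Real.arcsin r ≤ Real.pi / 2 := Real.arcsin_le_pi_div_two r
  have ht10 : 0 ≤ t₁ := by positivity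
  have ht11 : t₁ ≤ 1 := by
    rw [ht₁]
    rw [div_mul_eq_mul_div, div_le_one hπ]
    linarith
  have hsin1 : Real.sin (Real.pi / 2 * t₁) = r := by
    have : Real.pi / 2 * t₁ = Real.arcsin r := by
      rw [ht₁]; field_simp
    rw [this, Real.sin_arcsin (by linarith) hr1]
  have hsin2 : Real.sin (Real.pi / 2 * (1 - t₁)) = ‖w‖ := by
    have h1 : Real.pi / 2 * (1 - t₁) = Real.pi / 2 - Real.arcsin r := by
      rw [ht₁]; field_simp
    rw [h1, Real.sin_pi_div_two_sub, Real.cos_arcsin]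
    have : 1 - r ^ 2 = ‖w‖ ^ 2 := by linarith
    rw [this, Real.sqrt_sq hw0]
  obtain ⟨a₁, b₁, i, ha₁, hb₁, hab₁, hF₁⟩ :=
    comp_lemma n hn t₁ ht10 ht11 z hsin1.symm
  obtain ⟨a₂, b₂, j, ha₂, hb₂, hab₂, hF₂⟩ :=
    comp_lemma n hn (1 - t₁) (by linarith) (by linarith) w hsin2.symm
  haveI : Fact (1 < n) := ⟨by omega⟩
  have hii : i + 1 ≠ i := by
    intro h
    have : (1 : ZMod n) = 0 := by
      have := add_right_cancel (a := (1 : ZMod n)) (b := i) (c := 0)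
      apply this; rw [zero_add]; rw [add_comm] at h; exact h
    exact one_ne_zero this
  have hjj : j + 1 ≠ j := by
    intro h
    have : (1 : ZMod n) = 0 := by
      have := add_right_cancel (a := (1 : ZMod n)) (b := j) (c := 0)
      apply this; rw [zero_add]; rw [add_comm] at h; exact h
    exact one_ne_zero this
  have h01 : (0 : Fin 2) ≠ 1 := by decide
  set Y : Fin 2 × ZMod n → ℝ := fun p =>
    (if p = (0, i) then a₁ else 0) + (if p = (0, i + 1) then b₁ else 0) +
    (if p = (1, j) then a₂ else 0) + (if p = (1, j + 1) then b₂ else 0) with hY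
  have hY0i : Y (0, i) = a₁ := by
    simp [hY, Prod.ext_iff, hii.symm, h01]
  have hY0i1 : Y (0, i + 1) = b₁ := by
    simp [hY, Prod.ext_iff, hii, h01]
  have hY1j : Y (1, j) = a₂ := by
    simp [hY, Prod.ext_iff, hjj.symm, h01.symm]
  have hY1j1 : Y (1, j + 1) = b₂ := by
    simp [hY, Prod.ext_iff, hjj, h01.symm]
  have hAdm0 : Adm n Y 0 i := by
    intro k hk
    by_contra h
    push_neg at h
    apply hk
    simp [hY, Prod.ext_iff, h.1, h.2]
  have hAdm1 : Adm n Y 1 j := by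
    intro k hk
    by_contra h
    push_neg at h
    apply hk
    simp [hY, Prod.ext_iff, h.1, h.2, h01.symm]
  refine ⟨Y, ⟨?_, ?_, fun μ => ?_⟩, i, j, hAdm0, hAdm1, ?_, ?_⟩
  · intro p
    rw [hY]
    dsimp only
    refine add_nonneg (add_nonneg (add_nonneg ?_ ?_) ?_) ?_ <;> split <;>
      first | exact ha₁ | exact hb₁ | exact ha₂ | exact hb₂ | exact le_refl 0
  · rw [hY]
    simp only [Finset.sum_add_distrib, Finset.sum_ite_eq' Finset.univ, Finset.mem_univ, if_true]
    linarith
  · fin_cases μ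
    · exact ⟨i, hAdm0⟩
    · exact ⟨j, hAdm1⟩
  · rw [Fcomp, hY0i, hY0i1]; exact hF₁
  · rw [Fcomp, hY1j, hY1j1]; exact hF₂
end
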